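/- The ring s'(ℤ^d) is a Hermite ring: for every N ∈ ℕ and every N-tuple (a₁, …, a_N) of elements of s'(ℤ^d) for which there exist b₁, …, b_N ∈ s'(ℤ^d) with b₁a₁ + ⋯ + b_N a_N = 1, there exists an N×N matrix A with entries in s'(ℤ^d) that is invertible as an element of the matrix ring over s'(ℤ^d) and whose first column satisfies A_{i1} = a_i for i = 1, …, N. -/

import Mathlib

/-- The 1-norm of a lattice point `n ∈ ℤ^d`. -/
def norm1 {d : ℕ} (n : Fin d → ℤ) : ℝ := ∑ i, |(n i : ℝ)|

/-- `a : ℤ^d → ℂ` has at most polynomial growth, i.e. belongs to `s'(ℤ^d)`. -/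
def PolyGrowth {d : ℕ} (a : (Fin d → ℤ) → ℂ) : Prop :=
  ∃ M : ℝ, 0 < M ∧ ∃ k : ℕ, ∀ n : Fin d → ℤ, ‖a n‖ ≤ M * (1 + norm1 n) ^ k

open Finset

lemma norm1_nonneg {d : ℕ} (n : Fin d → ℤ) : 0 ≤ norm1 n :=
  Finset.sum_nonneg fun i _ => abs_nonneg _

lemma one_le_pow_base {d : ℕ} (n : Fin d → ℤ) (k : ℕ) : (1:ℝ) ≤ (1 + norm1 n) ^ k :=
  one_le_pow₀ (by linarith [norm1_nonneg n])

lemma polyGrowth_iff {d : ℕ} {f : (Fin d → ℤ) → ℂ} :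
    PolyGrowth f ↔ ∃ M : ℝ, ∃ k : ℕ, ∀ n, ‖f n‖ ≤ M * (1 + norm1 n) ^ k := by
  constructor
  · rintro ⟨M, _, k, h⟩; exact ⟨M, k, h⟩
  · rintro ⟨M, k, h⟩
    have hM : 0 ≤ M := by
      have h0 := (norm_nonneg _).trans (h (fun _ => 0))
      nlinarith [one_le_pow_base (d := d) (fun _ => 0) k]
    refine ⟨M + 1, by linarith, k, fun n => (h n).trans ?_⟩
    have := one_le_pow_base n k
    nlinarith

lemma polyGrowth_of_le {d : ℕ} {f g : (Fin d → ℤ) → ℂ}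
    (h : ∀ n, ‖f n‖ ≤ ‖g n‖) (hg : PolyGrowth g) : PolyGrowth f := by
  obtain ⟨M, hM, k, hk⟩ := hg
  exact ⟨M, hM, k, fun n => (h n).trans (hk n)⟩

lemma polyGrowth_const {d : ℕ} (c : ℂ) : PolyGrowth (fun _ : Fin d → ℤ => c) :=
  polyGrowth_iff.mpr ⟨‖c‖, 0, fun n => by simp⟩

lemma PolyGrowth.add {d : ℕ} {f g : (Fin d → ℤ) → ℂ} (hf : PolyGrowth f) (hg : PolyGrowth g) :
    PolyGrowth (fun n => f n + g n) := by
  obtain ⟨Mf, hMf, kf, hkf⟩ := hf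
  obtain ⟨Mg, hMg, kg, hkg⟩ := hg
  refine polyGrowth_iff.mpr ⟨Mf + Mg, kf + kg, fun n => ?_⟩
  have h1 : (1:ℝ) ≤ 1 + norm1 n := by linarith [norm1_nonneg n]
  calc ‖f n + g n‖ ≤ ‖f n‖ + ‖g n‖ :=
        norm_add_le _ _
    _ ≤ Mf * (1 + norm1 n) ^ kf + Mg * (1 + norm1 n) ^ kg := add_le_add (hkf n) (hkg n)
    _ ≤ Mf * (1 + norm1 n) ^ (kf + kg) + Mg * (1 + norm1 n) ^ (kf + kg) := by
        exact add_le_add (mul_le_mul_of_nonneg_left (pow_le_pow_right₀ h1 (by omega)) hMf.le)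
          (mul_le_mul_of_nonneg_left (pow_le_pow_right₀ h1 (by omega)) hMg.le)
    _ = (Mf + Mg) * (1 + norm1 n) ^ (kf + kg) := by ring

lemma PolyGrowth.mul {d : ℕ} {f g : (Fin d → ℤ) → ℂ} (hf : PolyGrowth f) (hg : PolyGrowth g) :
    PolyGrowth (fun n => f n * g n) := by
  obtain ⟨Mf, hMf, kf, hkf⟩ := hf
  obtain ⟨Mg, hMg, kg, hkg⟩ := hg
  refine polyGrowth_iff.mpr ⟨Mf * Mg, kf + kg, fun n => ?_⟩
  rw [norm_mul, pow_add]
  calc ‖f n‖ * ‖g n‖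
      ≤ (Mf * (1 + norm1 n) ^ kf) * (Mg * (1 + norm1 n) ^ kg) := by
        have h1 : (0:ℝ) < 1 + norm1 n := by linarith [norm1_nonneg n]
        apply mul_le_mul (hkf n) (hkg n) (norm_nonneg _)
        positivity
    _ = Mf * Mg * ((1 + norm1 n) ^ kf * (1 + norm1 n) ^ kg) := by ring

lemma polyGrowth_sum {d : ℕ} {ι : Type*} (s : Finset ι) (f : ι → (Fin d → ℤ) → ℂ)
    (h : ∀ i ∈ s, PolyGrowth (f i)) : PolyGrowth (fun n => ∑ i ∈ s, f i n) := by
  induction s using Finset.cons_induction with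
  | empty => simpa using polyGrowth_const (d := d) 0
  | cons i s hi ih =>
    simp only [Finset.sum_cons]
    exact (h i (Finset.mem_cons_self i s)).add (ih fun j hj => h j (Finset.mem_cons_of_mem hj))

lemma PolyGrowth.absC {d : ℕ} {f : (Fin d → ℤ) → ℂ} (hf : PolyGrowth f) :
    PolyGrowth (fun n => ((‖f n‖ : ℝ) : ℂ)) := by
  refine polyGrowth_of_le (g := f) (fun n => ?_) hf
  rw [Complex.norm_real, norm_norm]

/-- `s'(ℤ^d)` is a Hermite ring: any unimodular row is the first column of a matrix
over `s'(ℤ^d)` invertible over `s'(ℤ^d)`. Matrices are taken with entries in the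
ring of all functions `ℤ^d → ℂ` (pointwise operations), entries required to lie
in `s'(ℤ^d)`; invertibility over `s'(ℤ^d)` means a two-sided inverse matrix whose
entries also lie in `s'(ℤ^d)`. -/
theorem sprime_hermite (d N : ℕ) (hd : 1 ≤ d)
    (a b : Fin N → (Fin d → ℤ) → ℂ)
    (ha : ∀ i, PolyGrowth (a i)) (hb : ∀ i, PolyGrowth (b i))
    (hbez : ∀ n : Fin d → ℤ, ∑ i, b i n * a i n = 1) :
    ∃ A B : Matrix (Fin N) (Fin N) ((Fin d → ℤ) → ℂ),
      (∀ i j, PolyGrowth (A i j)) ∧ (∀ i j, PolyGrowth (B i j)) ∧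
      A * B = 1 ∧ B * A = 1 ∧
      ∀ i : Fin N, ∀ j : Fin N, (j : ℕ) = 0 → A i j = a i := by
  classical
  cases N with
  | zero => exact absurd (hbez fun _ => 0) (by simp)
  | succ m =>
  have hex : ∀ n : Fin d → ℤ, ∃ t : Fin (m+1),
      ∀ i, ‖a i n‖ ≤ ‖a t n‖ := by
    intro n
    obtain ⟨t, -, ht⟩ := Finset.exists_max_image (Finset.univ : Finset (Fin (m+1)))
      (fun i => ‖a i n‖) ⟨0, Finset.mem_univ 0⟩
    exact ⟨t, fun i => ht i (Finset.mem_univ i)⟩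
  choose t ht using hex
  set S : (Fin d → ℤ) → ℝ := fun n => ∑ i, ‖b i n‖ with hS
  set U : (Fin d → ℤ) → ℝ := fun n => ∑ i, ‖a i n‖ with hU
  have hSnn : ∀ n, 0 ≤ S n := fun n => Finset.sum_nonneg fun i _ => norm_nonneg _
  have hUnn : ∀ n, 0 ≤ U n := fun n => Finset.sum_nonneg fun i _ => norm_nonneg _
  have hkey : ∀ n, 1 ≤ S n * ‖a (t n) n‖ := by
    intro n
    calc (1:ℝ) = ‖∑ i, b i n * a i n‖ := by rw [hbez n]; simp
      _ ≤ ∑ i, ‖b i n * a i n‖ := norm_sum_le _ _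
      _ ≤ ∑ i, ‖b i n‖ * ‖a (t n) n‖ := by
          refine Finset.sum_le_sum fun i _ => ?_
          rw [norm_mul]
          exact mul_le_mul_of_nonneg_left (ht n i) (norm_nonneg _)
      _ = S n * ‖a (t n) n‖ := by rw [hS, ← Finset.sum_mul]
  have hα : ∀ n, a (t n) n ≠ 0 := by
    intro n h
    have := hkey n
    rw [h] at this; simp at this; linarith
  have hαpos : ∀ n, 0 < ‖a (t n) n‖ := fun n => norm_pos_iff.mpr (hα n)
  have hinv : ∀ n, (‖a (t n) n‖)⁻¹ ≤ S n := by
    intro n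
    rw [inv_eq_one_div, div_le_iff₀ (hαpos n)]
    linarith [hkey n]
  set σ : (Fin d → ℤ) → Equiv.Perm (Fin (m+1)) := fun n => Equiv.swap 0 (t n) with hσ
  have hσ0 : ∀ n, σ n 0 = t n := fun n => Equiv.swap_apply_left _ _
  have hσt : ∀ n, σ n (t n) = 0 := fun n => Equiv.swap_apply_right _ _
  have hσσ : ∀ n p, σ n (σ n p) = p := fun n p => Equiv.swap_apply_self _ _ _
  have hσeq0 : ∀ n p, σ n p = 0 ↔ p = t n := by
    intro n p
    rw [← hσt n]
    exact (σ n).apply_eq_iff_eq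
  have key : ∀ (n : Fin d → ℤ) (p q : Fin (m+1)),
      (∑ j, (if j = 0 then a p n else if σ n p = j then (1:ℂ) else 0) *
        (if q = t n then (if j = 0 then (a (t n) n)⁻¹ else -(a (σ n j) n) * (a (t n) n)⁻¹)
         else if σ n q = j then 1 else 0)) = if p = q then 1 else 0 := by
    intro n p q
    by_cases hp : p = t n
    · rw [Finset.sum_eq_single (0 : Fin (m+1))]
      · by_cases hq : q = t n
        · simp [hp, hq, mul_inv_cancel₀ (hα n)]
        · simp [hp, hq, hσeq0, Ne.symm hq]
      · intro j _ hj
        rw [if_neg hj, if_neg (show σ n p ≠ j by rw [hp, hσt n]; exact fun h => hj h.symm),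
          zero_mul]
      · intro h; exact absurd (Finset.mem_univ _) h
    · have hσp0 : σ n p ≠ 0 := fun h => hp ((hσeq0 n p).mp h)
      have hzero : ∀ j ∈ Finset.univ, j ∉ ({0, σ n p} : Finset (Fin (m+1))) →
          (if j = 0 then a p n else if σ n p = j then (1:ℂ) else 0) *
          (if q = t n then (if j = 0 then (a (t n) n)⁻¹ else -(a (σ n j) n) * (a (t n) n)⁻¹)
           else if σ n q = j then 1 else 0) = 0 := by
        intro j _ hj
        simp only [Finset.mem_insert, Finset.mem_singleton, not_or] at hj
        rw [if_neg hj.1, if_neg (fun h => hj.2 h.symm), zero_mul]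
      rw [← Finset.sum_subset (Finset.subset_univ {0, σ n p}) hzero,
        Finset.sum_pair (Ne.symm hσp0)]
      by_cases hq : q = t n
      · have h1 : ¬ (p = q) := fun h => hp (h.trans hq)
        simp only [if_pos rfl, if_pos hq, if_neg hσp0, hσσ, if_neg h1, if_true,
          eq_self_iff_true]
        ring
      · have h2 : ¬ ((σ n) q = 0) := fun h => hq ((hσeq0 n q).mp h)
        simp only [if_pos rfl, if_neg hq, if_neg hσp0, if_neg h2, if_neg hp, if_true,
          eq_self_iff_true, mul_zero, zero_add, one_mul, zero_mul, EmbeddingLike.apply_eq_iff_eq]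
        by_cases hpq : p = q
        · rw [if_pos hpq.symm, if_pos hpq]
        · rw [if_neg (fun h => hpq h.symm), if_neg hpq]
  refine ⟨fun p j => fun n => if j = 0 then a p n else if σ n p = j then 1 else 0,
    fun p q => fun n => if q = t n then
        (if p = 0 then (a (t n) n)⁻¹ else -(a (σ n p) n) * (a (t n) n)⁻¹)
      else if σ n q = p then 1 else 0, ?_, ?_, ?_, ?_, ?_⟩
  · -- A entries polynomial growth
    intro p j
    by_cases hj : j = 0
    · simp only [hj, if_pos rfl]; exact ha p
    · simp only [if_neg hj]
      exact polyGrowth_iff.mpr ⟨1, 0, fun n => by split <;> simp⟩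
  · -- B entries polynomial growth
    intro p q
    have hG : PolyGrowth (fun n => (1:ℂ) +
        (1 + ∑ i, ((‖a i n‖ : ℝ) : ℂ)) * (∑ i, ((‖b i n‖ : ℝ) : ℂ))) :=
      (polyGrowth_const 1).add
        (((polyGrowth_const 1).add (polyGrowth_sum _ _ fun i _ => (ha i).absC)).mul
          (polyGrowth_sum _ _ fun i _ => (hb i).absC))
    refine polyGrowth_of_le (fun n => ?_) hG
    have hcast : ((1:ℂ) + (1 + ∑ i, ((‖a i n‖ : ℝ) : ℂ))
        * (∑ i, ((‖b i n‖ : ℝ) : ℂ))) = (((1 + (1 + U n) * S n : ℝ)) : ℂ) := by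
      rw [hU, hS]; push_cast; ring
    rw [hcast, Complex.norm_real, Real.norm_eq_abs, abs_of_nonneg (by nlinarith [hSnn n, hUnn n])]
    beta_reduce
    have hb1 : ‖a (σ n p) n‖ ≤ U n := by
      rw [hU]
      exact Finset.single_le_sum (f := fun i => ‖a i n‖)
        (fun i _ => norm_nonneg _) (Finset.mem_univ _)
    split_ifs with h1 h2
    · rw [norm_inv]
      nlinarith [hinv n, hSnn n, hUnn n]
    · rw [norm_mul, norm_neg, norm_inv]
      have hm : ‖a ((σ n) p) n‖ * (‖a (t n) n‖)⁻¹ ≤ U n * S n :=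
        mul_le_mul hb1 (hinv n) (inv_nonneg.mpr (norm_nonneg _)) (hUnn n)
      nlinarith [hSnn n, hUnn n]
    · simp only [norm_one]
      nlinarith [hSnn n, hUnn n]
    · simp only [norm_zero]
      nlinarith [hSnn n, hUnn n]
  · -- A * B = 1
    ext p q n
    erw [Matrix.mul_apply, Finset.sum_apply, Matrix.one_apply]
    simp only [Pi.mul_apply]
    rw [apply_ite (fun f : (Fin d → ℤ) → ℂ => f n)]
    simp only [Pi.one_apply, Pi.zero_apply]
    exact key n p q
  · -- B * A = 1
    erw [mul_eq_one_comm]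
    ext p q n
    erw [Matrix.mul_apply, Finset.sum_apply, Matrix.one_apply]
    simp only [Pi.mul_apply]
    rw [apply_ite (fun f : (Fin d → ℤ) → ℂ => f n)]
    simp only [Pi.one_apply, Pi.zero_apply]
    exact key n p q
  · -- first column
    intro i j hj
    have : j = 0 := Fin.ext hj
    subst this
    funext n
    simp
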